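/- Let T be a tournament and σ an ordering of T such that for every pair of vertices u, v, if σ(u) < σ(v) then the outdegree of u in T is not smaller than the outdegree of v. Then the width of σ is equal to ctw(T). -/

import Mathlib

namespace TournamentPaper

open Classical

/-- A finite simple directed graph. -/
structure Digr (V : Type) where
  Adj : V → V → Prop
  loopless : ∀ v, ¬ Adj v v

namespace Digr

variable {V : Type}

/-- A tournament: exactly one of the two arcs between any two distinct vertices. -/
def IsTournament (T : Digr V) : Prop :=
  ∀ u v : V, u ≠ v → (T.Adj u v ↔ ¬ T.Adj v u)

/-- The arc set, as a set of ordered pairs. -/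
def arcs (T : Digr V) : Set (V × V) := {e | T.Adj e.1 e.2}

/-- The subdigraph induced by a set of vertices. -/
def induce (T : Digr V) (X : Set V) : Digr V where
  Adj u v := u ∈ X ∧ v ∈ X ∧ T.Adj u v
  loopless v h := T.loopless v h.2.2

/-- Deletion of a set of arcs. -/
def deleteArcs (T : Digr V) (F : Set (V × V)) : Digr V where
  Adj u v := T.Adj u v ∧ (u, v) ∉ F
  loopless v h := T.loopless v h.1

/-- Outdegree of a vertex. -/
noncomputable def outdeg (T : Digr V) (u : V) : ℕ := {v | T.Adj u v}.ncard

end Digr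

variable {V : Type}

/-- An ordering of the vertex set: a bijection onto `{1, …, |V|}`. -/
def IsOrdering [Fintype V] (σ : V → ℕ) : Prop :=
  Set.BijOn σ Set.univ (Set.Icc 1 (Fintype.card V))

/-- The `γ`-cut of an ordering: arcs `(u,v)` with `σ u > γ ≥ σ v`. -/
def cutAt (T : Digr V) (σ : V → ℕ) (γ : ℕ) : Set (V × V) :=
  {e | T.Adj e.1 e.2 ∧ γ < σ e.1 ∧ σ e.2 ≤ γ}

/-- The width of an ordering: the maximal size of a cut. -/
noncomputable def width [Fintype V] (T : Digr V) (σ : V → ℕ) : ℕ :=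
  (Finset.range (Fintype.card V + 1)).sup fun γ => (cutAt T σ γ).ncard

/-- The cutwidth: the minimum width over all orderings. -/
noncomputable def ctw [Fintype V] (T : Digr V) : ℕ :=
  sInf {w | ∃ σ : V → ℕ, IsOrdering σ ∧ width T σ = w}

/-- The σ-interval `σ(a, b]`. -/
def interval (σ : V → ℕ) (a b : ℕ) : Set V := {v | a < σ v ∧ σ v ≤ b}

/-- Arcs of `T` from `X` to `Y`. -/
def arcsBetween (T : Digr V) (X Y : Set V) : Set (V × V) :=
  {e | T.Adj e.1 e.2 ∧ e.1 ∈ X ∧ e.2 ∈ Y}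

/-- `∂⁺(I)` for `I = σ(a,b]`: arcs from `I` to `σ(0,a]`. -/
def dPlus [Fintype V] (T : Digr V) (σ : V → ℕ) (a b : ℕ) : Set (V × V) :=
  arcsBetween T (interval σ a b) (interval σ 0 a)

/-- `∂⁻(I)`: arcs from `σ(b,|V|]` to `I`. -/
def dMinus [Fintype V] (T : Digr V) (σ : V → ℕ) (a b : ℕ) : Set (V × V) :=
  arcsBetween T (interval σ b (Fintype.card V)) (interval σ a b)

/-- `Γ⁺(I)`: arcs from `I` to `σ(b,|V|]`. -/
def gPlus [Fintype V] (T : Digr V) (σ : V → ℕ) (a b : ℕ) : Set (V × V) :=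
  arcsBetween T (interval σ a b) (interval σ b (Fintype.card V))

/-- `Γ⁻(I)`: arcs from `σ(0,a]` to `I`. -/
def gMinus [Fintype V] (T : Digr V) (σ : V → ℕ) (a b : ℕ) : Set (V × V) :=
  arcsBetween T (interval σ 0 a) (interval σ a b)

/-- The interval `σ(a,b]` is `c`-flat: `|∂⁺| ≤ c`, `|∂⁻| ≤ c`, and the restriction
of `σ` to the induced subtournament has width at most `c`. -/
def Flat [Fintype V] (T : Digr V) (σ : V → ℕ) (a b c : ℕ) : Prop :=
  (dPlus T σ a b).ncard ≤ c ∧ (dMinus T σ a b).ncard ≤ c ∧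
  ∀ γ : ℕ, (cutAt (T.induce (interval σ a b)) σ γ).ncard ≤ c

/-- The list of arcs of a list of vertices (viewed as a walk). -/
def listArcs (l : List V) : List (V × V) := l.zip l.tail

/-- An immersion model of `H` in `G`: an injective vertex map together with, for each
arc of `H`, a directed simple path in `G` between the images of its endpoints, the
paths being pairwise arc-disjoint. -/
structure ImmersionModel {VH V : Type} (H : Digr VH) (G : Digr V) where
  vmap : VH → V
  inj : Function.Injective vmap
  path : ∀ e : VH × VH, H.Adj e.1 e.2 → List V
  chain : ∀ e he, (path e he).Chain' G.Adj
  nodup : ∀ e he, (path e he).Nodup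
  head : ∀ e he, (path e he).head? = some (vmap e.1)
  last : ∀ e he, (path e he).getLast? = some (vmap e.2)
  arc_disj : ∀ e he e' he', e ≠ e' → ∀ x ∈ listArcs (path e he), x ∉ listArcs (path e' he')

/-- The set of arcs of `G` used by an immersion model. -/
def ImmersionModel.arcsUsed {VH V : Type} {H : Digr VH} {G : Digr V}
    (M : ImmersionModel H G) : Set (V × V) :=
  {x | ∃ e he, x ∈ listArcs (M.path e he)}

/-- `G` contains `H` as an immersion. -/
def HasImm {VH V : Type} (H : Digr VH) (G : Digr V) : Prop :=
  Nonempty (ImmersionModel H G)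

/-- A family of pairwise arc-disjoint immersion models. -/
def ArcDisjointModels {VH V : Type} {H : Digr VH} {G : Digr V} {k : ℕ}
    (M : Fin k → ImmersionModel H G) : Prop :=
  ∀ i j, i ≠ j → Disjoint (M i).arcsUsed (M j).arcsUsed


section Aux
open Finset
set_option linter.unusedSectionVars false
variable [Fintype V]

lemma outdeg_eq_filter (T : Digr V) (u : V) :
    T.outdeg u = (univ.filter fun w => T.Adj u w).card := by
  rw [Digr.outdeg, Set.ncard_eq_toFinset_card']
  congr 1
  ext w
  simp

lemma sum_outdeg_eq (T : Digr V) (S : Finset V) :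
    ∑ v ∈ S, T.outdeg v
      = (univ.filter fun e : V × V => T.Adj e.1 e.2 ∧ e.1 ∈ S).card := by
  rw [Finset.card_eq_sum_card_fiberwise (f := Prod.fst) (t := S)
      (fun e he => by simp at he; exact he.2)]
  refine Finset.sum_congr rfl fun v hv => ?_
  rw [outdeg_eq_filter]
  refine (Finset.card_bij' (fun e _ => e.2) (fun w _ => (v, w)) ?_ ?_ ?_ ?_).symm
  · intro e he
    simp at he ⊢
    obtain ⟨⟨h1, _⟩, h2⟩ := he
    subst h2; exact h1
  · intro w hw
    simp at hw ⊢
    exact ⟨hw, hv⟩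
  · intro e he
    simp at he
    obtain ⟨_, h2⟩ := he
    exact Prod.ext h2.symm rfl
  · intro w _; rfl

lemma adj_ne (T : Digr V) {u v : V} (h : T.Adj u v) : u ≠ v := by
  rintro rfl; exact T.loopless u h

lemma master (T : Digr V) (hT : T.IsTournament) (S : Finset V) :
    2 * ((univ.filter fun e : V × V => T.Adj e.1 e.2 ∧ e.1 ∉ S ∧ e.2 ∈ S).card
        + ∑ v ∈ S, T.outdeg v)
      + (Sᶜ.card * Sᶜ.card - Sᶜ.card)
    = Fintype.card V * Fintype.card V - Fintype.card V := by
  classical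
  set B : Finset (V × V) :=
    univ.filter fun e : V × V => T.Adj e.1 e.2 ∧ (e.1 ∈ S ∨ e.2 ∈ S) with hB
  have h1 : (univ.filter fun e : V × V => T.Adj e.1 e.2 ∧ e.1 ∉ S ∧ e.2 ∈ S).card
      + ∑ v ∈ S, T.outdeg v = B.card := by
    rw [sum_outdeg_eq, ← Finset.card_union_of_disjoint]
    · congr 1
      ext e
      simp [hB]
      tauto
    · rw [Finset.disjoint_left]
      intro e he he'
      simp at he he'
      exact he.2.1 he'.2
  set A : Finset (V × V) :=
    univ.filter fun e : V × V => e.1 ≠ e.2 ∧ (e.1 ∈ S ∨ e.2 ∈ S) with hA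
  have h2 : A = B ∪ B.image Prod.swap := by
    ext e
    simp only [hA, hB, Finset.mem_union, Finset.mem_image, Finset.mem_filter,
      Finset.mem_univ, true_and]
    constructor
    · rintro ⟨hne, hS⟩
      by_cases h : T.Adj e.1 e.2
      · exact Or.inl ⟨h, hS⟩
      · refine Or.inr ⟨e.swap, ⟨(hT e.2 e.1 hne.symm).mpr h, ?_⟩, Prod.swap_swap e⟩
        tauto
    · intro h
      rcases h with ⟨h, hS⟩ | ⟨e', ⟨h, hS⟩, he⟩
      · exact ⟨adj_ne T h, hS⟩
      · subst he
        exact ⟨(adj_ne T h).symm, hS.symm⟩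
  have hdisj : Disjoint B (B.image Prod.swap) := by
    rw [Finset.disjoint_left]
    rintro e he he'
    simp [hB] at he he'
    obtain ⟨a, b, ⟨h', -⟩, h1, h2⟩ := he'
    exact ((hT a b (adj_ne T h')).mp h') he.1
  have h3 : A.card = 2 * B.card := by
    rw [h2, Finset.card_union_of_disjoint hdisj,
      Finset.card_image_of_injective _ Prod.swap_injective]
    ring
  have h4 : A ∪ Sᶜ.offDiag = (univ : Finset V).offDiag := by
    ext e
    simp [hA, Finset.mem_offDiag]
    tauto
  have hdisj2 : Disjoint A Sᶜ.offDiag := by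
    rw [Finset.disjoint_left]
    intro e he he'
    simp [hA, Finset.mem_offDiag] at he he'
    tauto
  have h5 : A.card + Sᶜ.offDiag.card = (univ : Finset V).offDiag.card := by
    rw [← Finset.card_union_of_disjoint hdisj2, h4]
  rw [h1, ← h3]
  have := Finset.offDiag_card (Sᶜ)
  have := Finset.offDiag_card (univ : Finset V)
  simp only [Finset.card_univ] at *
  omega

lemma cutAt_ncard (T : Digr V) (τ : V → ℕ) (γ : ℕ) :
    (cutAt T τ γ).ncard
      = (univ.filter fun e : V × V =>
          T.Adj e.1 e.2 ∧ e.1 ∉ (univ.filter fun v => τ v ≤ γ)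
            ∧ e.2 ∈ (univ.filter fun v => τ v ≤ γ)).card := by
  rw [Set.ncard_eq_toFinset_card']
  congr 1
  ext e
  rw [Set.mem_toFinset]
  simp [cutAt]

lemma card_prefix (τ : V → ℕ) (hτ : IsOrdering τ) (γ : ℕ) (hγ : γ ≤ Fintype.card V) :
    (univ.filter fun v => τ v ≤ γ).card = γ := by
  rw [show γ = (Finset.Icc 1 γ).card by rw [Nat.card_Icc]; omega]
  refine Finset.card_bij (fun v _ => τ v) ?_ ?_ ?_
  · intro v hv
    simp at hv
    have := hτ.mapsTo (Set.mem_univ v)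
    simp [Set.mem_Icc] at this
    simp [Finset.mem_Icc]
    exact ⟨this.1, hv⟩
  · intro u _ v _ h
    exact hτ.injOn (Set.mem_univ u) (Set.mem_univ v) h
  · intro j hj
    simp [Finset.mem_Icc] at hj
    have : j ∈ Set.Icc 1 (Fintype.card V) := ⟨hj.1, le_trans hj.2 hγ⟩
    obtain ⟨v, _, rfl⟩ := hτ.surjOn this
    exact ⟨v, by simp [hj.2], rfl⟩

lemma sum_le_sorted (f : V → ℕ) (S A : Finset V) (hcard : A.card = S.card)
    (h : ∀ v ∈ S \ A, ∀ w ∈ A \ S, f w ≤ f v) :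
    ∑ v ∈ A, f v ≤ ∑ v ∈ S, f v := by
  classical
  rw [← Finset.sum_inter_add_sum_sdiff A S f, ← Finset.sum_inter_add_sum_sdiff S A f,
    Finset.inter_comm]
  refine Nat.add_le_add_left ?_ _
  have hc : (A \ S).card = (S \ A).card := by
    have h1 := Finset.card_sdiff_add_card_inter A S
    have h2 := Finset.card_sdiff_add_card_inter S A
    rw [Finset.inter_comm] at h2
    omega
  rcases Finset.eq_empty_or_nonempty (S \ A) with he | hne
  · have : (A \ S) = ∅ := Finset.card_eq_zero.mp (by rw [hc, he]; simp)
    simp [this, he]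
  · obtain ⟨v₀, hv₀, hmin⟩ := Finset.exists_min_image (S \ A) f hne
    calc ∑ v ∈ A \ S, f v ≤ ∑ _v ∈ A \ S, f v₀ :=
          Finset.sum_le_sum fun w hw => h v₀ hv₀ w hw
      _ = (S \ A).card * f v₀ := by rw [Finset.sum_const, hc, smul_eq_mul]
      _ ≤ ∑ v ∈ S \ A, f v := by
          rw [← smul_eq_mul]
          exact Finset.card_nsmul_le_sum _ _ _ hmin

lemma cut_le_cut (T : Digr V) (hT : T.IsTournament)
    (σ : V → ℕ) (hσ : IsOrdering σ)
    (hsort : ∀ u v : V, σ u < σ v → T.outdeg v ≤ T.outdeg u)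
    (τ : V → ℕ) (hτ : IsOrdering τ) (γ : ℕ) (hγ : γ ≤ Fintype.card V) :
    (cutAt T σ γ).ncard ≤ (cutAt T τ γ).ncard := by
  classical
  set S := univ.filter fun v => σ v ≤ γ with hS
  set A := univ.filter fun v => τ v ≤ γ with hA
  have hcS : S.card = γ := card_prefix σ hσ γ hγ
  have hcA : A.card = γ := card_prefix τ hτ γ hγ
  have hsum : ∑ v ∈ A, T.outdeg v ≤ ∑ v ∈ S, T.outdeg v := by
    refine sum_le_sorted _ _ _ (hcA.trans hcS.symm) ?_
    intro v hv w hw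
    simp only [hS, hA, Finset.mem_sdiff, Finset.mem_filter, Finset.mem_univ, true_and,
      not_le] at hv hw
    exact hsort v w (lt_of_le_of_lt hv.1 hw.2)
  have hmS := master T hT S
  have hmA := master T hT A
  have hcc : Sᶜ.card = Aᶜ.card := by
    rw [Finset.card_compl, Finset.card_compl, hcS, hcA]
  rw [← hcc] at hmA
  rw [cutAt_ncard T σ γ, cutAt_ncard T τ γ]
  rw [← hS, ← hA] at *
  omega

end Aux

/-- sorting the vertices of a tournament by non-increasing outdegree
yields an ordering of optimum width. -/
theorem width_eq_ctw_of_sorted_by_outdegree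
    {V : Type} [Fintype V] (T : Digr V) (hT : T.IsTournament)
    (σ : V → ℕ) (hσ : IsOrdering σ)
    (hsort : ∀ u v : V, σ u < σ v → T.outdeg v ≤ T.outdeg u) :
    width T σ = ctw T := by
  have hwle : ∀ τ : V → ℕ, IsOrdering τ → width T σ ≤ width T τ := by
    intro τ hτ
    refine Finset.sup_le fun γ hγ => ?_
    have hγ' := hγ
    simp only [Finset.mem_range] at hγ'
    have h2 : (cutAt T τ γ).ncard ≤ width T τ :=
      Finset.le_sup (f := fun γ => (cutAt T τ γ).ncard) hγ
    exact le_trans (cut_le_cut T hT σ hσ hsort τ hτ γ (by omega)) h2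
  have hne : {w | ∃ τ : V → ℕ, IsOrdering τ ∧ width T τ = w}.Nonempty :=
    ⟨width T σ, σ, hσ, rfl⟩
  refine le_antisymm ?_ (Nat.sInf_le ⟨σ, hσ, rfl⟩)
  obtain ⟨τ, hτ, hw⟩ := Nat.sInf_mem hne
  rw [ctw, ← hw]
  exact hwle τ hτ


end TournamentPaper
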